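/- arXiv:math/0405530 — 2 statements merged into one kernel-verified Lean document; each statement's English description precedes it below -/
import Mathlib

section
/- For all natural numbers n and any real number m, ∑_{i=0}^{n} (-1)^i C(n,i) (m+i)^n = (-1)^n n!. -/
lemma alt_sum_key : ∀ n : ℕ, ∀ k : ℕ, k ≤ n → ∀ m : ℝ,
    ∑ i ∈ Finset.range (n + 1), (-1 : ℝ) ^ i * (n.choose i : ℝ) * (m + i) ^ k
      = if k = n then (-1 : ℝ) ^ n * (Nat.factorial n : ℝ) else 0 := by
  intro n
  induction n with
  | zero =>
    intro k hk m
    interval_cases k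
    simp
  | succ n ih =>
    intro k
    induction k with
    | zero =>
      intro _ m
      have : ∑ i ∈ Finset.range (n + 2), (-1 : ℝ) ^ i * ((n+1).choose i : ℝ) * (m + i) ^ 0
          = ∑ i ∈ Finset.range (n + 2), (-1 : ℝ) ^ i * ((n+1).choose i : ℝ) := by
        simp
      rw [this]
      have h := Int.alternating_sum_range_choose (n := n + 1)
      simp only [Nat.succ_ne_zero, if_false] at h
      have : ((∑ i ∈ Finset.range (n + 2), (-1 : ℤ) ^ i * ((n+1).choose i : ℤ) : ℤ) : ℝ)
          = ∑ i ∈ Finset.range (n + 2), (-1 : ℝ) ^ i * ((n+1).choose i : ℝ) := by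
        push_cast
        ring
      rw [← this, h]
      simp [Nat.succ_ne_zero]
    | succ k ihk =>
      intro hk m
      have hk' : k ≤ n := Nat.succ_le_succ_iff.mp hk
      have h1 : ∑ i ∈ Finset.range (n + 2), (-1 : ℝ) ^ i * ((n+1).choose i : ℝ) * (m + i) ^ k
          = 0 := by
        rw [ihk (le_trans hk' (Nat.le_succ n)) m]
        simp [Nat.ne_of_lt (Nat.lt_succ_of_le hk')]
      have h2 := ih k hk' (m + 1)
      have expand : ∀ i ∈ Finset.range (n + 2),
          (-1 : ℝ) ^ i * ((n+1).choose i : ℝ) * (m + i) ^ (k+1)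
          = m * ((-1 : ℝ) ^ i * ((n+1).choose i : ℝ) * (m + i) ^ k)
            + (-1 : ℝ) ^ i * (((n+1).choose i : ℕ) * i : ℕ) * (m + i) ^ k := by
        intro i _
        push_cast
        ring
      rw [Finset.sum_congr rfl expand, Finset.sum_add_distrib, ← Finset.mul_sum, h1, mul_zero,
        zero_add]
      have shift : ∑ i ∈ Finset.range (n + 2),
          (-1 : ℝ) ^ i * (((n+1).choose i : ℕ) * i : ℕ) * (m + i) ^ k
          = ∑ j ∈ Finset.range (n + 1),
            (-(n+1) : ℝ) * ((-1 : ℝ) ^ j * (n.choose j : ℝ) * ((m+1) + j) ^ k) := by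
        rw [Finset.sum_range_succ']
        simp only [Nat.mul_zero, Nat.cast_zero, mul_zero, zero_mul, mul_zero, add_zero]
        apply Finset.sum_congr rfl
        intro j _
        have hc : (n+1).choose (j+1) * (j+1) = (n+1) * n.choose j := by
          rw [← Nat.add_one_mul_choose_eq]
        rw [hc]
        have : (m + (j + 1 : ℕ) : ℝ) = (m + 1) + (j : ℕ) := by push_cast; ring
        rw [this]
        push_cast
        ring
      rw [shift, ← Finset.mul_sum, h2]
      by_cases h : k = n
      · subst h
        simp only [if_pos rfl]
        rw [Nat.factorial_succ]
        push_cast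
        ring
      · simp [h, fun hh => h (Nat.succ_injective hh)]

/-- Alternating binomial sum of `(m+i)^n` equals `(-1)^n n!`. -/
theorem alternating_binomial_sum_pow_n (n : ℕ) (m : ℝ) :
    ∑ i ∈ Finset.range (n + 1), (-1 : ℝ) ^ i * (n.choose i : ℝ) * (m + i) ^ n
      = (-1 : ℝ) ^ n * (Nat.factorial n : ℝ) := by
  have := alt_sum_key n n le_rfl m
  simpa using this
end

section
/- For all natural numbers n and any real number m, ∑_{i=0}^{n} (-1)^i C(n,i) (m+i)^{n+1} = (-1)^n (m + n/2) (n+1)!. -/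
open Finset

lemma pascal_shift (k n : ℕ) (m : ℝ) :
    ∑ i ∈ Finset.range (n + 2), (-1:ℝ)^i * ((n+1).choose i : ℝ) * (m + i)^k
      = (∑ i ∈ Finset.range (n + 1), (-1:ℝ)^i * (n.choose i : ℝ) * (m + i)^k)
        - ∑ i ∈ Finset.range (n + 1), (-1:ℝ)^i * (n.choose i : ℝ) * ((m+1) + i)^k := by
  rw [Finset.sum_range_succ' _ (n+1)]
  have h : ∀ i ∈ Finset.range (n+1),
      (-1:ℝ)^(i+1) * (((n+1).choose (i+1)) : ℝ) * (m + (i+1:ℕ))^k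
        = (-1:ℝ)^(i+1) * ((n.choose (i+1)) : ℝ) * (m + (i+1:ℕ))^k
          - (-1:ℝ)^i * ((n.choose i) : ℝ) * ((m+1) + i)^k := by
    intro i hi
    rw [Nat.choose_succ_succ]
    push_cast
    ring_nf
    rw [show 1 + i = i.succ from by omega]
  rw [Finset.sum_congr rfl h, Finset.sum_sub_distrib]
  have h2 : ∑ i ∈ Finset.range (n+1), (-1:ℝ)^(i+1) * ((n.choose (i+1)) : ℝ) * (m + (i+1:ℕ))^k
      + (-1:ℝ)^0 * (((n+1).choose 0) : ℝ) * (m + (0:ℕ))^k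
      = ∑ i ∈ Finset.range (n + 1), (-1:ℝ)^i * (n.choose i : ℝ) * (m + i)^k := by
    rw [Finset.sum_range_succ' (fun i => (-1:ℝ)^i * (n.choose i : ℝ) * (m + i)^k) n]
    have : ∑ i ∈ Finset.range (n+1), (-1:ℝ)^(i+1) * ((n.choose (i+1)) : ℝ) * (m + (i+1:ℕ))^k
        = ∑ i ∈ Finset.range n, (-1:ℝ)^(i+1) * ((n.choose (i+1)) : ℝ) * (m + (i+1:ℕ))^k := by
      rw [Finset.sum_range_succ, Nat.choose_succ_self]
      simp
    rw [this]
    simp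
  linarith [h2]

lemma mul_shift (k n : ℕ) (m : ℝ) :
    ∑ i ∈ Finset.range (n + 2), (-1:ℝ)^i * ((n+1).choose i : ℝ) * i * (m + i)^k
      = -(n+1) * ∑ j ∈ Finset.range (n + 1), (-1:ℝ)^j * (n.choose j : ℝ) * ((m+1) + j)^k := by
  rw [Finset.sum_range_succ' _ (n+1)]
  simp only [Nat.cast_zero, mul_zero, zero_mul, add_zero, Nat.cast_ofNat]
  rw [Finset.mul_sum]
  apply Finset.sum_congr rfl
  intro i hi
  have hc : ((n+1).choose (i+1)) * (i+1) = (n+1) * n.choose i := by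
    exact (Nat.add_one_mul_choose_eq n i).symm
  have hc' : (((n+1).choose (i+1)) : ℝ) * ((i:ℝ)+1) = ((n:ℝ)+1) * (n.choose i : ℝ) := by
    exact_mod_cast congrArg (fun x : ℕ => (x:ℝ)) hc
  push_cast
  calc (-1:ℝ)^(i+1) * (((n+1).choose (i+1)) : ℝ) * ((i:ℝ)+1) * (m + ((i:ℝ)+1))^k
      = (-1:ℝ)^(i+1) * ((((n+1).choose (i+1)) : ℝ) * ((i:ℝ)+1)) * (m + ((i:ℝ)+1))^k := by ring
    _ = (-1:ℝ)^(i+1) * (((n:ℝ)+1) * (n.choose i : ℝ)) * (m + ((i:ℝ)+1))^k := by rw [hc']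
    _ = -((n:ℝ)+1) * ((-1:ℝ)^i * (n.choose i : ℝ) * ((m+1) + i)^k) := by ring

lemma key (n : ℕ) : ∀ m : ℝ,
    ∑ i ∈ Finset.range (n + 1), (-1 : ℝ) ^ i * (n.choose i : ℝ) * (m + i) ^ (n + 1)
      = (-1 : ℝ) ^ n * (m + n / 2) * (Nat.factorial (n + 1) : ℝ) := by
  induction n with
  | zero => intro m; simp
  | succ n ih =>
    intro m
    -- first: the degree (n+1), level (n+1) sum is constant
    have hb : ∀ m' : ℝ, ∑ i ∈ Finset.range (n + 2), (-1:ℝ)^i * ((n+1).choose i : ℝ) * (m' + i)^(n+1)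
        = (-1:ℝ)^(n+1) * (Nat.factorial (n+1) : ℝ) := by
      intro m'
      rw [pascal_shift, ih m', ih (m'+1)]
      ring
    -- split (m+i)^{n+2} = m*(m+i)^{n+1} + i*(m+i)^{n+1}
    have hsplit : ∑ i ∈ Finset.range (n + 2), (-1:ℝ)^i * ((n+1).choose i : ℝ) * (m + i)^(n+2)
        = m * (∑ i ∈ Finset.range (n + 2), (-1:ℝ)^i * ((n+1).choose i : ℝ) * (m + i)^(n+1))
          + ∑ i ∈ Finset.range (n + 2), (-1:ℝ)^i * ((n+1).choose i : ℝ) * i * (m + i)^(n+1) := by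
      rw [Finset.mul_sum, ← Finset.sum_add_distrib]
      apply Finset.sum_congr rfl
      intro i hi
      have : (m + (i:ℝ))^(n+2) = (m + (i:ℝ)) * (m + (i:ℝ))^(n+1) := by ring
      rw [this]; ring
    rw [hsplit, hb m, mul_shift (n+1) n m, ih (m+1)]
    have hfac : (Nat.factorial (n+2) : ℝ) = ((n:ℝ)+2) * (Nat.factorial (n+1) : ℝ) := by
      rw [Nat.factorial_succ]; push_cast; ring
    push_cast [hfac]
    ring

/-- Alternating binomial sum of `(m+i)^{n+1}` equals `(-1)^n (m + n/2) (n+1)!`. -/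
theorem alternating_binomial_sum_pow_succ (n : ℕ) (m : ℝ) :
    ∑ i ∈ Finset.range (n + 1), (-1 : ℝ) ^ i * (n.choose i : ℝ) * (m + i) ^ (n + 1)
      = (-1 : ℝ) ^ n * (m + n / 2) * (Nat.factorial (n + 1) : ℝ) := by
  exact key n m
end
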